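/- For natural numbers n and k, the Catalan number Cₙ is congruent to 0 modulo 2^k if and only if d(α(n)) ≥ k. -/

import Mathlib

/-- Binary digit sum: the sum of the digits of `n` in base 2. -/
def binaryDigitSum (n : ℕ) : ℕ := (Nat.digits 2 n).sum

/-- `α(n) = (CF₂(n+1) − 1)/2` where `CF₂(m) = m / 2^{ν₂(m)}` is the odd cofactor. -/
def alphaFn (n : ℕ) : ℕ := ((n + 1) / 2 ^ padicValNat 2 (n + 1) - 1) / 2

lemma dsum_two_mul (n : ℕ) : (Nat.digits 2 (2 * n)).sum = (Nat.digits 2 n).sum := by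
  rcases Nat.eq_zero_or_pos n with h | h
  · simp [h]
  · rw [Nat.digits_def' (by norm_num) (by omega)]
    simp [Nat.mul_div_cancel_left n (by norm_num : 0 < 2), Nat.mul_mod_right]

lemma dsum_two_mul_add_one (n : ℕ) :
    (Nat.digits 2 (2 * n + 1)).sum = (Nat.digits 2 n).sum + 1 := by
  rw [Nat.digits_def' (by norm_num) (by omega)]
  have h1 : (2 * n + 1) % 2 = 1 := by omega
  have h2 : (2 * n + 1) / 2 = n := by omega
  rw [h1, h2]
  simp [Nat.add_comm]

lemma dsum_shift (m v : ℕ) :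
    (Nat.digits 2 (m * 2 ^ (v + 1) + (2 ^ v - 1))).sum = (Nat.digits 2 m).sum + v := by
  induction v with
  | zero => simpa [Nat.mul_comm] using dsum_two_mul m
  | succ v ih =>
    have hpow : 0 < 2 ^ v := Nat.pow_pos (by norm_num)
    have h : m * 2 ^ (v + 2) + (2 ^ (v + 1) - 1)
        = 2 * (m * 2 ^ (v + 1) + (2 ^ v - 1)) + 1 := by
      ring_nf
      omega
    rw [h, dsum_two_mul_add_one, ih]
    omega

lemma dsum_alpha (n : ℕ) :
    binaryDigitSum n = binaryDigitSum (alphaFn n) + padicValNat 2 (n + 1) := by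
  set v := padicValNat 2 (n + 1) with hv
  set o := (n + 1) / 2 ^ v with ho
  have hdvd : 2 ^ v ∣ n + 1 := pow_padicValNat_dvd
  have hno : n + 1 = 2 ^ v * o := (Nat.mul_div_cancel' hdvd).symm
  have hnotdvd : ¬ (2 ^ (v + 1) ∣ n + 1) := pow_succ_padicValNat_not_dvd n.succ_ne_zero
  have hodd' : ¬ 2 ∣ o := by
    rintro ⟨c, hc⟩
    exact hnotdvd ⟨c, by rw [hno, hc]; ring⟩
  have hodd : o % 2 = 1 := by omega
  have hpow : 0 < 2 ^ v := Nat.pow_pos (by norm_num)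
  have ho1 : 1 ≤ o := by
    rcases Nat.eq_zero_or_pos o with h0 | h0
    · omega
    · exact h0
  set m := (o - 1) / 2 with hm
  have hom : o = 2 * m + 1 := by omega
  have halpha : alphaFn n = m := rfl
  have hn : n = m * 2 ^ (v + 1) + (2 ^ v - 1) := by
    have : n + 1 = m * 2 ^ (v + 1) + 2 ^ v := by
      rw [hno, hom]; ring
    omega
  rw [halpha]
  unfold binaryDigitSum
  rw [hn, dsum_shift]

lemma padicValNat_catalan (n : ℕ) :
    padicValNat 2 (catalan n) + padicValNat 2 (n + 1) = binaryDigitSum n := by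
  have hc : (n + 1) * catalan n = Nat.centralBinom n := succ_mul_catalan_eq_centralBinom n
  have hcat : catalan n ≠ 0 := by
    intro h0
    have := succ_mul_catalan_eq_centralBinom n
    rw [h0, Nat.mul_zero] at this
    exact (Nat.centralBinom_pos n).ne' this.symm
  have hcb : padicValNat 2 (Nat.centralBinom n) = binaryDigitSum n := by
    have h := sub_one_mul_padicValNat_choose_eq_sub_sum_digits' (p := 2) (k := n) (n := n)
    have h2n : (Nat.digits 2 (n + n)).sum = (Nat.digits 2 n).sum := by
      have := dsum_two_mul n
      rw [two_mul] at this
      exact this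
    rw [h2n] at h
    have hle : (Nat.digits 2 n).sum ≤ (Nat.digits 2 n).sum + (Nat.digits 2 n).sum :=
      Nat.le_add_right _ _
    unfold Nat.centralBinom
    have h2 : 2 * n = n + n := by ring
    rw [h2]
    unfold binaryDigitSum
    omega
  have hmul : padicValNat 2 ((n + 1) * catalan n)
      = padicValNat 2 (n + 1) + padicValNat 2 (catalan n) :=
    padicValNat.mul n.succ_ne_zero hcat
  rw [hc, hcb] at hmul
  omega

/-- `Cₙ ≡ 0 (mod 2^k)` iff `d(α(n)) ≥ k`. -/
theorem catalan_modEq_zero_pow_two_iff (n k : ℕ) :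
    catalan n ≡ 0 [MOD 2 ^ k] ↔ k ≤ binaryDigitSum (alphaFn n) := by
  have hcat : catalan n ≠ 0 := by
    intro h0
    have := succ_mul_catalan_eq_centralBinom n
    rw [h0, Nat.mul_zero] at this
    exact (Nat.centralBinom_pos n).ne' this.symm
  have hval : padicValNat 2 (catalan n) = binaryDigitSum (alphaFn n) := by
    have h1 := padicValNat_catalan n
    have h2 := dsum_alpha n
    omega
  rw [Nat.modEq_zero_iff_dvd,
    Nat.Prime.pow_dvd_iff_le_factorization Nat.prime_two hcat,
    Nat.factorization_def _ Nat.prime_two, hval]
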